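/- Let f be a Herglotz function (analytic map from ℂ₊ to the closed upper half-plane) with representation f(z) = αz + β + ∫ (1/(t-z) - t/(1+t²)) dμ(t). If Im f(iy) = y + O(1/y) as y → ∞, then α = 1, μ(ℝ) < ∞, and lim_{y→∞} y(Im f(iy) - y) = μ(ℝ). -/

import Mathlib

open Filter MeasureTheory Complex


lemma aux_int_b (μ : Measure ℝ) (hint : Integrable (fun t : ℝ => 1 / (1 + t ^ 2)) μ)
    (y : ℝ) (hy : 1 ≤ y) : Integrable (fun t : ℝ => y / (t ^ 2 + y ^ 2)) μ := by
  refine (hint.const_mul y).mono' ?_ ?_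
  · apply Continuous.aestronglyMeasurable
    exact continuous_const.div (by continuity) (fun t => by positivity)
  · refine Eventually.of_forall fun t => ?_
    have h1 : (0:ℝ) < t ^ 2 + y ^ 2 := by positivity
    have : ‖y / (t ^ 2 + y ^ 2)‖ = y / (t ^ 2 + y ^ 2) := by
      rw [Real.norm_eq_abs, _root_.abs_of_nonneg (by positivity)]
    rw [this, mul_one_div]
    apply div_le_div_of_nonneg_left (by linarith) (by positivity)
    nlinarith

lemma aux_int_a (μ : Measure ℝ) (hint : Integrable (fun t : ℝ => 1 / (1 + t ^ 2)) μ)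
    (y : ℝ) (hy : 1 ≤ y) :
    Integrable (fun t : ℝ => t * (1 - y ^ 2) / ((t ^ 2 + y ^ 2) * (1 + t ^ 2))) μ := by
  refine (hint.const_mul (1 + y ^ 2)).mono' ?_ ?_
  · apply Continuous.aestronglyMeasurable
    exact (continuous_id.mul continuous_const).div (by continuity) (fun t => by positivity)
  · refine Eventually.of_forall fun t => ?_
    have h1 : (0:ℝ) < t ^ 2 + y ^ 2 := by positivity
    have h2 : (0:ℝ) < 1 + t ^ 2 := by positivity
    have habs : |t| ≤ t ^ 2 + y ^ 2 := by
      nlinarith [_root_.sq_abs t, abs_nonneg t, sq_nonneg (|t| - 1)]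
    have h3 : |1 - y ^ 2| ≤ 1 + y ^ 2 := by
      rw [_root_.abs_le]; constructor <;> nlinarith
    have h4 : |t| * |1 - y ^ 2| * (1 + t ^ 2) ≤ (t ^ 2 + y ^ 2) * (1 + y ^ 2) * (1 + t ^ 2) :=
      mul_le_mul_of_nonneg_right (mul_le_mul habs h3 (abs_nonneg _) h1.le) h2.le
    have : ‖t * (1 - y ^ 2) / ((t ^ 2 + y ^ 2) * (1 + t ^ 2))‖
        = |t| * |1 - y ^ 2| / ((t ^ 2 + y ^ 2) * (1 + t ^ 2)) := by
      rw [Real.norm_eq_abs, _root_.abs_div, _root_.abs_of_pos (by positivity : (0:ℝ) < (t^2+y^2)*(1+t^2)),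
        _root_.abs_mul]
    rw [this, mul_one_div, div_le_div_iff₀ (by positivity) h2]
    nlinarith [h4]

lemma aux_decomp (y : ℝ) (hy : 0 < y) (t : ℝ) :
    1 / ((t : ℂ) - Complex.I * y) - (t : ℂ) / (1 + (t : ℂ) ^ 2) =
      ((t * (1 - y ^ 2) / ((t ^ 2 + y ^ 2) * (1 + t ^ 2)) : ℝ) : ℂ) +
        ((y / (t ^ 2 + y ^ 2) : ℝ) : ℂ) * Complex.I := by
  have h1 : (t : ℂ) - Complex.I * y ≠ 0 := by
    intro h
    have := congrArg Complex.im h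
    simp at this
    linarith
  have h2 : (1 : ℂ) + (t : ℂ) ^ 2 ≠ 0 := by
    have : ((1 + t ^ 2 : ℝ) : ℂ) ≠ 0 := by
      rw [Ne, Complex.ofReal_eq_zero]; positivity
    simpa using this
  have h3 : ((t : ℂ) ^ 2 + (y : ℂ) ^ 2) ≠ 0 := by
    have : ((t ^ 2 + y ^ 2 : ℝ) : ℂ) ≠ 0 := by
      rw [Ne, Complex.ofReal_eq_zero]; positivity
    simpa using this
  push_cast
  field_simp
  ring_nf
  simp only [Complex.I_sq]
  ring

lemma aux_int_h (μ : Measure ℝ) (hint : Integrable (fun t : ℝ => 1 / (1 + t ^ 2)) μ)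
    (y : ℝ) (hy : 1 ≤ y) :
    Integrable (fun t : ℝ => 1 / ((t : ℂ) - Complex.I * y) - (t : ℂ) / (1 + (t : ℂ) ^ 2)) μ := by
  have hy0 : (0:ℝ) < y := lt_of_lt_of_le one_pos hy
  refine (integrable_congr (Eventually.of_forall fun t => (aux_decomp y hy0 t).symm)).mp ?_
  exact ((aux_int_a μ hint y hy).ofReal).add (((aux_int_b μ hint y hy).ofReal).mul_const Complex.I)

lemma aux_im (f : ℂ → ℂ) (α β : ℝ) (μ : Measure ℝ)
    (hint : Integrable (fun t : ℝ => 1 / (1 + t ^ 2)) μ)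
    (hrep : ∀ z : ℂ, 0 < z.im →
      f z = (α : ℂ) * z + (β : ℂ) +
        ∫ t : ℝ, (1 / ((t : ℂ) - z) - (t : ℂ) / (1 + (t : ℂ) ^ 2)) ∂μ)
    (y : ℝ) (hy : 1 ≤ y) :
    (f (Complex.I * y)).im = α * y + ∫ t, y / (t ^ 2 + y ^ 2) ∂μ := by
  have hy0 : (0:ℝ) < y := lt_of_lt_of_le one_pos hy
  rw [hrep (Complex.I * y) (by simpa using hy0)]
  have hI : (∫ t : ℝ, (1 / ((t : ℂ) - Complex.I * y) - (t : ℂ) / (1 + (t : ℂ) ^ 2)) ∂μ)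
      = ((∫ t, t * (1 - y ^ 2) / ((t ^ 2 + y ^ 2) * (1 + t ^ 2)) ∂μ : ℝ) : ℂ)
        + ((∫ t, y / (t ^ 2 + y ^ 2) ∂μ : ℝ) : ℂ) * Complex.I := by
    have hA : Integrable (fun t : ℝ => ((t * (1 - y ^ 2) / ((t ^ 2 + y ^ 2) * (1 + t ^ 2)) : ℝ) : ℂ)) μ :=
      (aux_int_a μ hint y hy).ofReal
    have hB : Integrable (fun t : ℝ => ((y / (t ^ 2 + y ^ 2) : ℝ) : ℂ) * Complex.I) μ :=
      ((aux_int_b μ hint y hy).ofReal).mul_const Complex.I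
    rw [integral_congr_ae (Eventually.of_forall (aux_decomp y hy0)), integral_add hA hB]
    congr 1
    · exact integral_ofReal
    · rw [integral_mul_const]
      congr 1
      exact integral_ofReal
  rw [hI]
  simp [Complex.add_im, Complex.mul_im]


lemma aux_ptlim0 (t : ℝ) :
    Tendsto (fun y : ℝ => 1 / (t ^ 2 + y ^ 2)) atTop (nhds 0) := by
  have h0 : Tendsto (fun y : ℝ => t ^ 2 + y ^ 2) atTop atTop :=
    tendsto_atTop_add_const_left _ _ (tendsto_pow_atTop two_ne_zero)
  simp only [one_div]
  exact h0.inv_tendsto_atTop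

lemma aux_ptlim1 (t : ℝ) :
    Tendsto (fun y : ℝ => y ^ 2 / (t ^ 2 + y ^ 2)) atTop (nhds 1) := by
  have h0 : Tendsto (fun y : ℝ => t ^ 2 + y ^ 2) atTop atTop :=
    tendsto_atTop_add_const_left _ _ (tendsto_pow_atTop two_ne_zero)
  have hinv : Tendsto (fun y : ℝ => (t ^ 2 + y ^ 2)⁻¹) atTop (nhds 0) :=
    h0.inv_tendsto_atTop
  have hsub : Tendsto (fun y : ℝ => 1 - t ^ 2 * (t ^ 2 + y ^ 2)⁻¹) atTop (nhds 1) := by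
    have := (hinv.const_mul (t ^ 2)).const_sub 1
    simpa using this
  apply Tendsto.congr' _ hsub
  filter_upwards [eventually_ge_atTop (1 : ℝ)] with y hy
  have hne : t ^ 2 + y ^ 2 ≠ 0 := by positivity
  field_simp
  ring

/-- Let `f` be a Herglotz function with representation
`f(z) = αz + β + ∫ (1/(t-z) - t/(1+t²)) dμ(t)` where `μ` is a positive measure on `ℝ`
with `∫ dμ(t)/(1+t²) < ∞`.  If `Im f(iy) = y + O(1/y)` as `y → ∞`, then `α = 1`,
`μ(ℝ) < ∞`, and `lim_{y→∞} y (Im f(iy) - y) = μ(ℝ)`. -/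
theorem herglotz_two_term (f : ℂ → ℂ) (α β : ℝ) (μ : Measure ℝ)
    (hanal : DifferentiableOn ℂ f {z : ℂ | 0 < z.im})
    (hherglotz : ∀ z : ℂ, 0 < z.im → 0 ≤ (f z).im)
    (hint : Integrable (fun t : ℝ => 1 / (1 + t ^ 2)) μ)
    (hrep : ∀ z : ℂ, 0 < z.im →
      f z = (α : ℂ) * z + (β : ℂ) +
        ∫ t : ℝ, (1 / ((t : ℂ) - z) - (t : ℂ) / (1 + (t : ℂ) ^ 2)) ∂μ)
    (hasymp : ∃ C y₀ : ℝ, ∀ y : ℝ, y₀ ≤ y → |(f (Complex.I * y)).im - y| ≤ C / y) :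
    α = 1 ∧ μ Set.univ < ⊤ ∧
      Tendsto (fun y : ℝ => y * ((f (Complex.I * y)).im - y)) atTop
        (nhds (μ Set.univ).toReal) := by
  obtain ⟨C, y₀, hC⟩ := hasymp
  -- notation
  set S : ℝ → ℝ := fun y => ∫ t, 1 / (t ^ 2 + y ^ 2) ∂μ with hS
  -- g y = y * S y
  have hgS : ∀ y : ℝ, (∫ t, y / (t ^ 2 + y ^ 2) ∂μ) = y * S y := by
    intro y
    rw [hS]
    rw [← integral_const_mul]
    congr 1
    funext t
    rw [mul_one_div]
  -- measurability helpers
  have hmeas0 : ∀ y : ℝ, 1 ≤ y →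
      AEStronglyMeasurable (fun t : ℝ => 1 / (t ^ 2 + y ^ 2)) μ := by
    intro y hy
    apply Continuous.aestronglyMeasurable
    exact continuous_const.div (by continuity) (fun t => by positivity)
  have hmeas1 : ∀ y : ℝ, 1 ≤ y →
      AEStronglyMeasurable (fun t : ℝ => y ^ 2 / (t ^ 2 + y ^ 2)) μ := by
    intro y hy
    apply Continuous.aestronglyMeasurable
    exact continuous_const.div (by continuity) (fun t => by positivity)
  -- S tends to 0
  have hS0 : Tendsto S atTop (nhds 0) := by
    have := tendsto_integral_filter_of_dominated_convergence (μ := μ)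
      (l := atTop) (F := fun (y : ℝ) (t : ℝ) => 1 / (t ^ 2 + y ^ 2)) (f := fun _ : ℝ => (0:ℝ))
      (bound := fun t : ℝ => 1 / (1 + t ^ 2))
      ((eventually_ge_atTop (1:ℝ)).mono fun y hy => hmeas0 y hy)
      (((eventually_ge_atTop (1:ℝ)).mono fun y hy => by
        refine Eventually.of_forall fun t => ?_
        have h1 : (0:ℝ) < 1 + t ^ 2 := by positivity
        rw [Real.norm_eq_abs, _root_.abs_of_nonneg (by positivity)]
        apply one_div_le_one_div_of_le h1
        nlinarith))
      hint
      (Eventually.of_forall fun t => aux_ptlim0 t)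
    rw [hS]
    simpa using this
  -- the key bound from the asymptotics
  have hkey : ∀ y : ℝ, max 1 y₀ ≤ y → |(α - 1) + S y| ≤ C / y ^ 2 := by
    intro y hy
    have hy1 : 1 ≤ y := le_trans (le_max_left _ _) hy
    have hy0' : y₀ ≤ y := le_trans (le_max_right _ _) hy
    have hypos : 0 < y := lt_of_lt_of_le one_pos hy1
    have h1 := hC y hy0'
    rw [aux_im f α β μ hint hrep y hy1, hgS y] at h1
    have h2 : α * y + y * S y - y = y * ((α - 1) + S y) := by ring
    rw [h2, _root_.abs_mul, _root_.abs_of_pos hypos] at h1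
    have h3 := mul_le_mul_of_nonneg_right h1 hypos.le
    rw [div_mul_cancel₀ _ (ne_of_gt hypos)] at h3
    rw [le_div_iff₀ (by positivity : (0:ℝ) < y ^ 2)]
    nlinarith [h3]
  have hα : α = 1 := by
    have hsq : Tendsto (fun y : ℝ => (α - 1) + S y) atTop (nhds 0) := by
      apply squeeze_zero_norm' (a := fun y : ℝ => C / y ^ 2)
      · filter_upwards [eventually_ge_atTop (max 1 y₀)] with y hy
        exact hkey y hy
      · exact Tendsto.div_atTop tendsto_const_nhds (tendsto_pow_atTop two_ne_zero)
    have h2 : Tendsto (fun y : ℝ => (α - 1) + S y) atTop (nhds ((α - 1) + 0)) :=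
      hS0.const_add _
    have := tendsto_nhds_unique h2 hsq
    linarith
  -- integrability of y^2/(t^2+y^2)
  have hint2 : ∀ y : ℝ, 1 ≤ y → Integrable (fun t : ℝ => y ^ 2 / (t ^ 2 + y ^ 2)) μ := by
    intro y hy
    refine (integrable_congr (Eventually.of_forall fun t => ?_)).mp
      ((aux_int_b μ hint y hy).const_mul y)
    have h0 : (0:ℝ) < t ^ 2 + y ^ 2 := by positivity
    ring
  have hval : ∀ y : ℝ, (∫ t, y ^ 2 / (t ^ 2 + y ^ 2) ∂μ) = y * (y * S y) := by
    intro y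
    rw [← hgS y, ← integral_const_mul]
    congr 1
    funext t
    ring
  -- bound on the integrals
  have hCb : ∀ y : ℝ, max 1 y₀ ≤ y → (∫ t, y ^ 2 / (t ^ 2 + y ^ 2) ∂μ) ≤ C := by
    intro y hy
    have hy1 : 1 ≤ y := le_trans (le_max_left _ _) hy
    have hypos : 0 < y := lt_of_lt_of_le one_pos hy1
    have h1 := hC y (le_trans (le_max_right _ _) hy)
    rw [aux_im f α β μ hint hrep y hy1, hgS y, hα] at h1
    have h2 : 1 * y + y * S y - y = y * S y := by ring
    rw [h2] at h1
    have h3 : y * S y ≤ C / y := le_trans (le_abs_self _) h1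
    rw [hval y]
    calc y * (y * S y) ≤ y * (C / y) := by
          apply mul_le_mul_of_nonneg_left h3 hypos.le
      _ = C := by field_simp
  -- finiteness of μ
  have hfin : μ Set.univ ≤ ENNReal.ofReal C := by
    set c : ℕ → ℝ := fun n => max 1 y₀ + n with hc
    have hc1 : ∀ n, max 1 y₀ ≤ c n := fun n =>
      le_add_of_nonneg_right (by positivity)
    have hcy : ∀ n, 1 ≤ c n := fun n => le_trans (le_max_left _ _) (hc1 n)
    have hctop : Tendsto c atTop atTop :=
      tendsto_atTop_add_const_left _ _ tendsto_natCast_atTop_atTop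
    have hmeasn : ∀ n : ℕ, Measurable
        (fun t : ℝ => ENNReal.ofReal ((c n) ^ 2 / (t ^ 2 + (c n) ^ 2))) := by
      intro n
      apply ENNReal.measurable_ofReal.comp
      exact (Continuous.div continuous_const (by continuity)
        (fun t => by have := hcy n; positivity)).measurable
    have hlim : ∀ t : ℝ, Filter.liminf
        (fun n : ℕ => ENNReal.ofReal ((c n) ^ 2 / (t ^ 2 + (c n) ^ 2))) atTop = 1 := by
      intro t
      have h1 : Tendsto (fun n : ℕ => (c n) ^ 2 / (t ^ 2 + (c n) ^ 2)) atTop (nhds 1) :=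
        (aux_ptlim1 t).comp hctop
      have h2 := (ENNReal.tendsto_ofReal h1)
      rw [ENNReal.ofReal_one] at h2
      exact h2.liminf_eq
    have step1 : μ Set.univ = ∫⁻ t, Filter.liminf
        (fun n : ℕ => ENNReal.ofReal ((c n) ^ 2 / (t ^ 2 + (c n) ^ 2))) atTop ∂μ := by
      rw [← lintegral_one]
      congr 1
      funext t
      rw [hlim t]
    rw [step1]
    refine le_trans (lintegral_liminf_le hmeasn) ?_
    have bnd : ∀ n : ℕ, (∫⁻ t, ENNReal.ofReal ((c n) ^ 2 / (t ^ 2 + (c n) ^ 2)) ∂μ)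
        ≤ ENNReal.ofReal C := by
      intro n
      rw [← ofReal_integral_eq_lintegral_ofReal (hint2 (c n) (hcy n))
        (Eventually.of_forall fun t => by positivity)]
      exact ENNReal.ofReal_le_ofReal (hCb (c n) (hc1 n))
    calc Filter.liminf (fun n : ℕ => ∫⁻ t, ENNReal.ofReal ((c n) ^ 2 / (t ^ 2 + (c n) ^ 2)) ∂μ) atTop
        ≤ Filter.liminf (fun _ : ℕ => ENNReal.ofReal C) atTop :=
          Filter.liminf_le_liminf (Eventually.of_forall bnd)
      _ = ENNReal.ofReal C := Filter.liminf_const _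
  have hμfin : μ Set.univ < ⊤ := lt_of_le_of_lt hfin ENNReal.ofReal_lt_top
  refine ⟨hα, hμfin, ?_⟩
  haveI : IsFiniteMeasure μ := ⟨hμfin⟩
  -- dominated convergence for the final limit
  have hT : Tendsto (fun y : ℝ => ∫ t, y ^ 2 / (t ^ 2 + y ^ 2) ∂μ) atTop
      (nhds (∫ _ : ℝ, (1:ℝ) ∂μ)) := by
    apply tendsto_integral_filter_of_dominated_convergence (bound := fun _ : ℝ => (1:ℝ))
    · exact (eventually_ge_atTop (1:ℝ)).mono fun y hy => hmeas1 y hy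
    · refine (eventually_ge_atTop (1:ℝ)).mono fun y hy => Eventually.of_forall fun t => ?_
      rw [Real.norm_eq_abs, _root_.abs_of_nonneg (by positivity)]
      rw [div_le_one (by positivity)]
      nlinarith
    · exact integrable_const 1
    · exact Eventually.of_forall fun t => aux_ptlim1 t
  have hone : (∫ _ : ℝ, (1:ℝ) ∂μ) = (μ Set.univ).toReal := by simp; rfl
  rw [hone] at hT
  apply Tendsto.congr' _ hT
  filter_upwards [eventually_ge_atTop (max 1 y₀)] with y hy
  have hy1 : 1 ≤ y := le_trans (le_max_left _ _) hy
  rw [aux_im f α β μ hint hrep y hy1, hgS y, hα, hval y]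
  ring
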